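/- arXiv:1608.00834 — 7 statements merged into one kernel-verified Lean document; each statement's English description precedes it below -/
import Mathlib

section
/- Let G be the group presented by ⟨a, b, c | a² = b⁻³, a² central, c³ = 1, abc = 1⟩ and W = G₄ = ⟨s, t | s³ = t³ = 1, sts = tst⟩. Then the maps φ₁ : W → G with s ↦ c, t ↦ c⁻¹b and φ₂ : G → W with a ↦ (sts)⁻¹, b ↦ st, c ↦ s are mutually inverse group isomorphisms. -/
namespace Stmt3

inductive GenW | s | t
inductive GenG | a | b | c

open FreeGroup

/-- BMR presentation of G₄: ⟨s, t | s³ = t³ = 1, sts = tst⟩. -/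
def relsW : Set (FreeGroup GenW) :=
  { of GenW.s ^ 3, of GenW.t ^ 3,
    of GenW.s * of GenW.t * of GenW.s * (of GenW.t * of GenW.s * of GenW.t)⁻¹ }

/-- ER presentation: ⟨a, b, c | a² = b⁻³, a² central, c³ = 1, abc = 1⟩. -/
def relsG : Set (FreeGroup GenG) :=
  { of GenG.a ^ 2 * of GenG.b ^ 3,
    of GenG.a ^ 2 * of GenG.b * (of GenG.a ^ 2)⁻¹ * (of GenG.b)⁻¹,
    of GenG.a ^ 2 * of GenG.c * (of GenG.a ^ 2)⁻¹ * (of GenG.c)⁻¹,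
    of GenG.c ^ 3,
    of GenG.a * of GenG.b * of GenG.c }

abbrev W := PresentedGroup relsW
abbrev G := PresentedGroup relsG

section Aux
variable {H : Type*} [Group H]

lemma cinv_sq {c : H} (h2 : c ^ 3 = 1) : c⁻¹ = c ^ 2 :=
  inv_eq_of_mul_eq_one_right (by rw [← h2]; group)

lemma ccinv {c : H} (h2 : c ^ 3 = 1) : c⁻¹ * c⁻¹ = c := by
  rw [cinv_sq h2, show c ^ 2 * c ^ 2 = c ^ 3 * c by group, h2, one_mul]

lemma b_pow_six {b c : H} (h1 : c * b * c = b ^ 2) (h2 : c ^ 3 = 1)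
    (h3 : c * b ^ 3 = b ^ 3 * c) : b ^ 6 = 1 := by
  have hcc := ccinv h2
  have hcb : c * b = b ^ 2 * c⁻¹ := by rw [← h1]; group
  have hbc : b * c = c⁻¹ * b ^ 2 := by rw [← h1]; group
  have e1 : c * b ^ 2 * c = b ^ 2 * c * b ^ 2 := by
    calc c * b ^ 2 * c = (c * b) * (b * c) := by rw [pow_two]; group
    _ = (b ^ 2 * c⁻¹) * (c⁻¹ * b ^ 2) := by rw [hcb, hbc]
    _ = b ^ 2 * (c⁻¹ * c⁻¹) * b ^ 2 := by group
    _ = b ^ 2 * c * b ^ 2 := by rw [hcc]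
  have e2 : c⁻¹ * b * c = c * b ^ 2 := by
    rw [mul_assoc, hbc, ← mul_assoc, hcc]
  have e3 : b = c * b ^ 2 * c * b ^ 2 * c := by
    calc b = c⁻¹ * (c * b * c) * c⁻¹ := by group
    _ = c⁻¹ * b ^ 2 * c⁻¹ := by rw [h1]
    _ = (c⁻¹ * b * c) * (c⁻¹ * b * c) * (c⁻¹ * c⁻¹) := by rw [pow_two]; group
    _ = (c * b ^ 2) * (c * b ^ 2) * c := by rw [e2, hcc]
    _ = c * b ^ 2 * c * b ^ 2 * c := by group
  have e4 : c * b ^ 2 * c * b ^ 2 * c = b ^ 7 := by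
    calc c * b ^ 2 * c * b ^ 2 * c = (c * b ^ 2 * c) * (b ^ 2 * c) := by group
    _ = (b ^ 2 * c * b ^ 2) * (b ^ 2 * c) := by rw [e1]
    _ = b ^ 2 * (c * b ^ 3) * (b * c) := by group
    _ = b ^ 2 * (b ^ 3 * c) * (c⁻¹ * b ^ 2) := by rw [h3, hbc]
    _ = b ^ 7 := by group
  have e5 : b = b ^ 7 := e3.trans e4
  calc b ^ 6 = b⁻¹ * b ^ 7 := by group
  _ = b⁻¹ * b := by rw [← e5]
  _ = 1 := by group

lemma t_cubed {b c : H} (h1 : c * b * c = b ^ 2) (h2 : c ^ 3 = 1)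
    (h3 : c * b ^ 3 = b ^ 3 * c) : (c⁻¹ * b) ^ 3 = 1 := by
  calc (c⁻¹ * b) ^ 3 = (c ^ 2 * b) ^ 3 := by rw [cinv_sq h2]
  _ = c * ((c * b * c) * (c * b * c) * (c * b * c)) * c⁻¹ := by
        simp only [pow_succ, pow_zero, one_mul]; group
  _ = c * (b ^ 2 * b ^ 2 * b ^ 2) * c⁻¹ := by rw [h1]
  _ = c * b ^ 6 * c⁻¹ := by group
  _ = 1 := by rw [b_pow_six h1 h2 h3]; group

end Aux

section Main

local notation "Ag" => (PresentedGroup.of GenG.a : G)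
local notation "Bg" => (PresentedGroup.of GenG.b : G)
local notation "Cg" => (PresentedGroup.of GenG.c : G)
local notation "S" => (PresentedGroup.of GenW.s : W)
local notation "T" => (PresentedGroup.of GenW.t : W)

lemma relG_one : ∀ r ∈ relsG, PresentedGroup.mk relsG r = 1 := fun r hr =>
  (QuotientGroup.eq_one_iff r).mpr (Subgroup.subset_normalClosure hr)

lemma relW_one : ∀ r ∈ relsW, PresentedGroup.mk relsW r = 1 := fun r hr =>
  (QuotientGroup.eq_one_iff r).mpr (Subgroup.subset_normalClosure hr)

lemma rG1 : Ag ^ 2 * Bg ^ 3 = 1 := by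
  have h := relG_one _ (show of GenG.a ^ 2 * of GenG.b ^ 3 ∈ relsG by simp [relsG])
  simpa [PresentedGroup.of, _root_.map_mul, _root_.map_pow] using h

lemma rG3 : Ag ^ 2 * Cg * (Ag ^ 2)⁻¹ * Cg⁻¹ = 1 := by
  have h := relG_one _ (show of GenG.a ^ 2 * of GenG.c * (of GenG.a ^ 2)⁻¹ * (of GenG.c)⁻¹ ∈ relsG
    by simp [relsG])
  simpa [PresentedGroup.of, _root_.map_mul, _root_.map_pow, _root_.map_inv] using h

lemma rG4 : Cg ^ 3 = 1 := by
  have h := relG_one _ (show of GenG.c ^ 3 ∈ relsG by simp [relsG])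
  simpa [PresentedGroup.of, _root_.map_pow] using h

lemma rG5 : Ag * Bg * Cg = 1 := by
  have h := relG_one _ (show of GenG.a * of GenG.b * of GenG.c ∈ relsG by simp [relsG])
  simpa [PresentedGroup.of, _root_.map_mul] using h

lemma rW1 : S ^ 3 = 1 := by
  have h := relW_one _ (show of GenW.s ^ 3 ∈ relsW by simp [relsW])
  simpa [PresentedGroup.of, _root_.map_pow] using h

lemma rW2 : T ^ 3 = 1 := by
  have h := relW_one _ (show of GenW.t ^ 3 ∈ relsW by simp [relsW])
  simpa [PresentedGroup.of, _root_.map_pow] using h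

lemma rW3 : S * T * S = T * S * T := by
  have h := relW_one _
    (show of GenW.s * of GenW.t * of GenW.s * (of GenW.t * of GenW.s * of GenW.t)⁻¹ ∈ relsW
      by simp [relsW])
  simp only [_root_.map_mul, _root_.map_inv] at h
  exact mul_inv_eq_one.mp h

-- derived relations in G
lemma hB3 : (Ag ^ 2)⁻¹ = Bg ^ 3 := inv_eq_of_mul_eq_one_right rG1

lemma hCg : Cg = Bg⁻¹ * Ag⁻¹ := by
  rw [← inv_eq_of_mul_eq_one_right rG5]; group

lemma hG1 : Cg * Bg * Cg = Bg ^ 2 := by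
  calc Cg * Bg * Cg = Bg⁻¹ * (Ag ^ 2)⁻¹ := by rw [hCg]; group
  _ = Bg⁻¹ * Bg ^ 3 := by rw [hB3]
  _ = Bg ^ 2 := by simp only [pow_succ, pow_zero, one_mul]; group

lemma hG3 : Cg * Bg ^ 3 = Bg ^ 3 * Cg := by
  have hcom : Ag ^ 2 * Cg = Cg * Ag ^ 2 := by
    calc Ag ^ 2 * Cg = (Ag ^ 2 * Cg * (Ag ^ 2)⁻¹ * Cg⁻¹) * (Cg * Ag ^ 2) := by group
    _ = 1 * (Cg * Ag ^ 2) := by rw [rG3]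
    _ = Cg * Ag ^ 2 := one_mul _
  rw [← hB3]
  calc Cg * (Ag ^ 2)⁻¹ = (Ag ^ 2)⁻¹ * (Ag ^ 2 * Cg) * (Ag ^ 2)⁻¹ := by group
  _ = (Ag ^ 2)⁻¹ * (Cg * Ag ^ 2) * (Ag ^ 2)⁻¹ := by rw [hcom]
  _ = (Ag ^ 2)⁻¹ * Cg := by group

def fW : GenW → G
  | GenW.s => Cg
  | GenW.t => Cg⁻¹ * Bg

lemma hfW : ∀ r ∈ relsW, FreeGroup.lift fW r = 1 := by
  intro r hr
  simp only [relsW, Set.mem_insert_iff, Set.mem_singleton_iff] at hr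
  rcases hr with h | h | h
  · subst h
    simp only [_root_.map_pow, FreeGroup.lift_apply_of]
    exact rG4
  · subst h
    simp only [_root_.map_pow, FreeGroup.lift_apply_of]
    exact t_cubed hG1 rG4 hG3
  · subst h
    simp only [_root_.map_mul, _root_.map_inv, FreeGroup.lift_apply_of]
    have hb2 : Bg * Cg = Cg⁻¹ * (Bg * Bg) := by
      rw [show Cg⁻¹ * (Bg * Bg) = Cg⁻¹ * Bg ^ 2 by rw [pow_two], ← hG1]; group
    show Cg * (Cg⁻¹ * Bg) * Cg * ((Cg⁻¹ * Bg) * Cg * (Cg⁻¹ * Bg))⁻¹ = 1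
    calc Cg * (Cg⁻¹ * Bg) * Cg * ((Cg⁻¹ * Bg) * Cg * (Cg⁻¹ * Bg))⁻¹
        = (Bg * Cg) * (Cg⁻¹ * (Bg * Bg))⁻¹ := by group
    _ = (Cg⁻¹ * (Bg * Bg)) * (Cg⁻¹ * (Bg * Bg))⁻¹ := by rw [hb2]
    _ = 1 := by group

def fG : GenG → W
  | GenG.a => (S * T * S)⁻¹
  | GenG.b => S * T
  | GenG.c => S

lemma hst6 : S * T * S * T * S * T = (T * S * T) * (T * S * T) := by
  calc S * T * S * T * S * T = (S * T * S) * (T * S * T) := by group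
  _ = (T * S * T) * (T * S * T) := by rw [rW3]

lemma hts6 : T * S * T * S * T * S = (T * S * T) * (T * S * T) := by
  calc T * S * T * S * T * S = (T * S * T) * (S * T * S) := by group
  _ = (T * S * T) * (T * S * T) := by rw [rW3]

lemma hz' : (S * T * S) * (S * T * S) = (S * T) * (S * T) * (S * T) := by
  calc (S * T * S) * (S * T * S) = (S * T * S) * (T * S * T) := by rw [rW3]
  _ = (S * T) * (S * T) * (S * T) := by group

lemma hxx : (S * T * S)⁻¹ * (S * T * S)⁻¹ = ((S * T) * (S * T) * (S * T))⁻¹ := by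
  rw [← hz']; group

lemma hcomS : ((S * T) * (S * T) * (S * T)) * S = S * ((S * T) * (S * T) * (S * T)) := by
  calc ((S * T) * (S * T) * (S * T)) * S = S * (T * S * T * S * T * S) := by group
  _ = S * ((T * S * T) * (T * S * T)) := by rw [hts6]
  _ = S * (S * T * S * T * S * T) := by rw [← hst6]
  _ = S * ((S * T) * (S * T) * (S * T)) := by group

lemma hfG : ∀ r ∈ relsG, FreeGroup.lift fG r = 1 := by
  intro r hr
  simp only [relsG, Set.mem_insert_iff, Set.mem_singleton_iff] at hr
  rcases hr with h | h | h | h | h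
  · subst h
    simp only [_root_.map_mul, _root_.map_pow, FreeGroup.lift_apply_of]
    show ((S * T * S)⁻¹) ^ 2 * (S * T) ^ 3 = 1
    simp only [pow_succ, pow_zero, one_mul]
    calc (S * T * S)⁻¹ * (S * T * S)⁻¹ * ((S * T) * (S * T) * (S * T))
        = ((S * T) * (S * T) * (S * T))⁻¹ * ((S * T) * (S * T) * (S * T)) := by rw [hxx]
    _ = 1 := by group
  · subst h
    simp only [_root_.map_mul, _root_.map_pow, _root_.map_inv, FreeGroup.lift_apply_of]
    show ((S * T * S)⁻¹) ^ 2 * (S * T) * (((S * T * S)⁻¹) ^ 2)⁻¹ * (S * T)⁻¹ = 1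
    simp only [pow_succ, pow_zero, one_mul]
    rw [hxx]; group
  · subst h
    simp only [_root_.map_mul, _root_.map_pow, _root_.map_inv, FreeGroup.lift_apply_of]
    show ((S * T * S)⁻¹) ^ 2 * S * (((S * T * S)⁻¹) ^ 2)⁻¹ * S⁻¹ = 1
    simp only [pow_succ, pow_zero, one_mul]
    rw [hxx]
    calc ((S * T) * (S * T) * (S * T))⁻¹ * S * (((S * T) * (S * T) * (S * T))⁻¹)⁻¹ * S⁻¹
        = ((S * T) * (S * T) * (S * T))⁻¹ * (S * ((S * T) * (S * T) * (S * T))) * S⁻¹ := by group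
    _ = ((S * T) * (S * T) * (S * T))⁻¹ * (((S * T) * (S * T) * (S * T)) * S) * S⁻¹ := by
          rw [← hcomS]
    _ = 1 := by group
  · subst h
    simp only [_root_.map_pow, FreeGroup.lift_apply_of]
    exact rW1
  · subst h
    simp only [_root_.map_mul, FreeGroup.lift_apply_of]
    show (S * T * S)⁻¹ * (S * T) * S = 1
    group

def φ₁' : W →* G := PresentedGroup.toGroup hfW
def φ₂' : G →* W := PresentedGroup.toGroup hfG

theorem G4_iso :
    ∃ (φ₁ : W →* G) (φ₂ : G →* W),
      φ₁ (PresentedGroup.of GenW.s) = PresentedGroup.of GenG.c ∧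
      φ₁ (PresentedGroup.of GenW.t) =
        (PresentedGroup.of GenG.c)⁻¹ * PresentedGroup.of GenG.b ∧
      φ₂ (PresentedGroup.of GenG.a) =
        (PresentedGroup.of GenW.s * PresentedGroup.of GenW.t * PresentedGroup.of GenW.s)⁻¹ ∧
      φ₂ (PresentedGroup.of GenG.b) =
        PresentedGroup.of GenW.s * PresentedGroup.of GenW.t ∧
      φ₂ (PresentedGroup.of GenG.c) = PresentedGroup.of GenW.s ∧
      φ₂.comp φ₁ = MonoidHom.id W ∧
      φ₁.comp φ₂ = MonoidHom.id G := by
  have h1s : φ₁' (PresentedGroup.of GenW.s) = Cg := PresentedGroup.toGroup.of hfW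
  have h1t : φ₁' (PresentedGroup.of GenW.t) = Cg⁻¹ * Bg := PresentedGroup.toGroup.of hfW
  have h2a : φ₂' (PresentedGroup.of GenG.a) = (S * T * S)⁻¹ := PresentedGroup.toGroup.of hfG
  have h2b : φ₂' (PresentedGroup.of GenG.b) = S * T := PresentedGroup.toGroup.of hfG
  have h2c : φ₂' (PresentedGroup.of GenG.c) = S := PresentedGroup.toGroup.of hfG
  refine ⟨φ₁', φ₂', h1s, h1t, h2a, h2b, h2c, ?_, ?_⟩
  · apply PresentedGroup.ext
    intro x
    cases x with
    | s =>
      simp only [MonoidHom.comp_apply, MonoidHom.id_apply, h1s, h2c]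
    | t =>
      simp only [MonoidHom.comp_apply, MonoidHom.id_apply, h1t, _root_.map_mul,
        _root_.map_inv, h2b, h2c]
      group
  · apply PresentedGroup.ext
    intro x
    cases x with
    | a =>
      simp only [MonoidHom.comp_apply, MonoidHom.id_apply, h2a, _root_.map_mul,
        _root_.map_inv, h1s, h1t]
      have hA : (Bg * Cg)⁻¹ = Ag := by
        have h : Ag * (Bg * Cg) = 1 := by rw [← mul_assoc]; exact rG5
        rw [← inv_eq_of_mul_eq_one_right h, inv_inv]
      calc (Cg * (Cg⁻¹ * Bg) * Cg)⁻¹ = (Bg * Cg)⁻¹ := by group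
      _ = Ag := hA
    | b =>
      simp only [MonoidHom.comp_apply, MonoidHom.id_apply, h2b, _root_.map_mul, h1s, h1t]
      group
    | c =>
      simp only [MonoidHom.comp_apply, MonoidHom.id_apply, h2c, h1s]

end Main

end Stmt3
end

section
/- Let G be the group presented by ⟨a, b, c | a² central, b³ = 1, c^k = 1, abc = 1⟩ and W = ⟨s, t | s³ = t^k = 1, stst = tsts⟩ for a fixed k ≥ 3. Then s ↦ b, t ↦ c extends to a group isomorphism W → G with inverse given by a ↦ (st)⁻¹, b ↦ s, c ↦ t. -/
namespace Stmt4

inductive GenW | s | t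
inductive GenG | a | b | c

open FreeGroup

/-- BMR presentation ⟨s, t | s³ = tᵏ = 1, stst = tsts⟩ (G₅, G₁₀, G₁₈ for k = 3, 4, 5). -/
def relsW (k : ℕ) : Set (FreeGroup GenW) :=
  { of GenW.s ^ 3, of GenW.t ^ k,
    of GenW.s * of GenW.t * of GenW.s * of GenW.t *
      (of GenW.t * of GenW.s * of GenW.t * of GenW.s)⁻¹ }

/-- ER presentation ⟨a, b, c | a² central, b³ = 1, cᵏ = 1, abc = 1⟩. -/
def relsG (k : ℕ) : Set (FreeGroup GenG) :=
  { of GenG.a ^ 2 * of GenG.b * (of GenG.a ^ 2)⁻¹ * (of GenG.b)⁻¹,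
    of GenG.a ^ 2 * of GenG.c * (of GenG.a ^ 2)⁻¹ * (of GenG.c)⁻¹,
    of GenG.b ^ 3,
    of GenG.c ^ k,
    of GenG.a * of GenG.b * of GenG.c }

lemma mk_rel_one {α : Type*} {rels : Set (FreeGroup α)} {r : FreeGroup α} (h : r ∈ rels) :
    PresentedGroup.mk rels r = 1 :=
  (QuotientGroup.eq_one_iff r).2 (Subgroup.subset_normalClosure h)

/-! ### Consequences of the relations in `G` -/

section Glemmas

variable {k : ℕ}

local notation "A" => (PresentedGroup.of GenG.a : PresentedGroup (relsG k))
local notation "B" => (PresentedGroup.of GenG.b : PresentedGroup (relsG k))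
local notation "C" => (PresentedGroup.of GenG.c : PresentedGroup (relsG k))

lemma hGb3 : B ^ 3 = 1 := by
  have h := mk_rel_one (rels := relsG k) (r := of GenG.b ^ 3) (by simp [relsG])
  rwa [_root_.map_pow] at h

lemma hGck : C ^ k = 1 := by
  have h := mk_rel_one (rels := relsG k) (r := of GenG.c ^ k) (by simp [relsG])
  rwa [_root_.map_pow] at h

lemma hGabc : A * B * C = 1 := by
  have h := mk_rel_one (rels := relsG k) (r := of GenG.a * of GenG.b * of GenG.c)
    (by simp [relsG])
  rwa [_root_.map_mul, _root_.map_mul] at h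

lemma hGa2b : Commute (A ^ 2) B := by
  have h := mk_rel_one (rels := relsG k)
    (r := of GenG.a ^ 2 * of GenG.b * (of GenG.a ^ 2)⁻¹ * (of GenG.b)⁻¹) (by simp [relsG])
  simp only [_root_.map_mul, _root_.map_inv, _root_.map_pow] at h
  rw [mul_inv_eq_one] at h
  exact mul_inv_eq_iff_eq_mul.mp h

lemma hGa2c : Commute (A ^ 2) C := by
  have h := mk_rel_one (rels := relsG k)
    (r := of GenG.a ^ 2 * of GenG.c * (of GenG.a ^ 2)⁻¹ * (of GenG.c)⁻¹) (by simp [relsG])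
  simp only [_root_.map_mul, _root_.map_inv, _root_.map_pow] at h
  rw [mul_inv_eq_one] at h
  exact mul_inv_eq_iff_eq_mul.mp h

lemma hGbc : B * C = A⁻¹ := by
  have h : A * (B * C) = 1 := by rw [← mul_assoc]; exact hGabc
  exact eq_inv_of_mul_eq_one_right h

lemma hGbraid : B * C * B * C = C * B * C * B := by
  have e1 : B * C * B * C = (A ^ 2)⁻¹ := by
    rw [mul_assoc (B * C) B C, hGbc, ← mul_inv_rev, ← sq]
  have e2 : C * (A ^ 2)⁻¹ * C⁻¹ = (A ^ 2)⁻¹ := by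
    rw [← (hGa2c (k := k)).inv_left.eq, mul_inv_cancel_right]
  symm
  calc C * B * C * B = C * (B * C * B * C) * C⁻¹ := by
        simp [mul_assoc]
    _ = C * (A ^ 2)⁻¹ * C⁻¹ := by rw [e1, mul_assoc C, ← mul_assoc]
    _ = B * C * B * C := by rw [e2, e1]

end Glemmas

/-! ### Consequences of the relations in `W` -/

section Wlemmas

variable {k : ℕ}

local notation "S" => (PresentedGroup.of GenW.s : PresentedGroup (relsW k))
local notation "T" => (PresentedGroup.of GenW.t : PresentedGroup (relsW k))

lemma hWs3 : S ^ 3 = 1 := by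
  have h := mk_rel_one (rels := relsW k) (r := of GenW.s ^ 3) (by simp [relsW])
  rwa [_root_.map_pow] at h

lemma hWtk : T ^ k = 1 := by
  have h := mk_rel_one (rels := relsW k) (r := of GenW.t ^ k) (by simp [relsW])
  rwa [_root_.map_pow] at h

lemma hWbraid : S * T * S * T = T * S * T * S := by
  have h := mk_rel_one (rels := relsW k)
    (r := of GenW.s * of GenW.t * of GenW.s * of GenW.t *
      (of GenW.t * of GenW.s * of GenW.t * of GenW.s)⁻¹) (by simp [relsW])
  simp only [_root_.map_mul, _root_.map_inv] at h
  rwa [mul_inv_eq_one] at h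

lemma hWsq : (S * T) ^ 2 = S * T * S * T := by simp only [sq, mul_assoc]

lemma hWcT : Commute ((S * T) ^ 2) T := by
  show (S * T) ^ 2 * T = T * (S * T) ^ 2
  calc (S * T) ^ 2 * T = S * T * S * T * T := by rw [hWsq]
    _ = T * S * T * S * T := by rw [hWbraid]
    _ = T * (S * T) ^ 2 := by rw [hWsq]; simp only [mul_assoc]

lemma hWcS : Commute ((S * T) ^ 2) S := by
  have h := ((Commute.refl (S * T)).pow_left 2).mul_right (hWcT (k := k)).inv_right
  rwa [mul_inv_cancel_right] at h

end Wlemmas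

/-! ### The two homomorphisms -/

def fW (k : ℕ) : GenW → PresentedGroup (relsG k)
  | GenW.s => PresentedGroup.of GenG.b
  | GenW.t => PresentedGroup.of GenG.c

def gG (k : ℕ) : GenG → PresentedGroup (relsW k)
  | GenG.a => (PresentedGroup.of GenW.s * PresentedGroup.of GenW.t)⁻¹
  | GenG.b => PresentedGroup.of GenW.s
  | GenG.c => PresentedGroup.of GenW.t

@[simp] lemma fW_s {k : ℕ} : fW k GenW.s = PresentedGroup.of GenG.b := rfl
@[simp] lemma fW_t {k : ℕ} : fW k GenW.t = PresentedGroup.of GenG.c := rfl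
@[simp] lemma gG_a {k : ℕ} :
    gG k GenG.a = (PresentedGroup.of GenW.s * PresentedGroup.of GenW.t)⁻¹ := rfl
@[simp] lemma gG_b {k : ℕ} : gG k GenG.b = PresentedGroup.of GenW.s := rfl
@[simp] lemma gG_c {k : ℕ} : gG k GenG.c = PresentedGroup.of GenW.t := rfl

lemma hf (k : ℕ) : ∀ r ∈ relsW k, FreeGroup.lift (fW k) r = 1 := by
  intro r hr
  simp only [relsW, Set.mem_insert_iff, Set.mem_singleton_iff] at hr
  rcases hr with h | h | h <;> subst h
  · simp only [_root_.map_pow, FreeGroup.lift_apply_of, fW_s]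
    exact hGb3
  · simp only [_root_.map_pow, FreeGroup.lift_apply_of, fW_t]
    exact hGck
  · simp only [_root_.map_mul, _root_.map_inv, FreeGroup.lift_apply_of, fW_s, fW_t]
    rw [mul_inv_eq_one]
    exact hGbraid

lemma hg (k : ℕ) : ∀ r ∈ relsG k, FreeGroup.lift (gG k) r = 1 := by
  intro r hr
  simp only [relsG, Set.mem_insert_iff, Set.mem_singleton_iff] at hr
  have hS := hWcS (k := k)
  have hT := hWcT (k := k)
  rcases hr with h | h | h | h | h <;> subst h
  · simp only [_root_.map_mul, _root_.map_inv, _root_.map_pow, FreeGroup.lift_apply_of, gG_a, gG_b]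
    have hc : Commute (((PresentedGroup.of GenW.s * PresentedGroup.of GenW.t)⁻¹) ^ 2)
        (PresentedGroup.of (rels := relsW k) GenW.s) := by
      rw [inv_pow]; exact hS.inv_left
    rw [hc.eq]
    simp [mul_assoc]
  · simp only [_root_.map_mul, _root_.map_inv, _root_.map_pow, FreeGroup.lift_apply_of, gG_a, gG_c]
    have hc : Commute (((PresentedGroup.of GenW.s * PresentedGroup.of GenW.t)⁻¹) ^ 2)
        (PresentedGroup.of (rels := relsW k) GenW.t) := by
      rw [inv_pow]; exact hT.inv_left
    rw [hc.eq]
    simp [mul_assoc]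
  · simp only [_root_.map_pow, FreeGroup.lift_apply_of, gG_b]
    exact hWs3
  · simp only [_root_.map_pow, FreeGroup.lift_apply_of, gG_c]
    exact hWtk
  · simp only [_root_.map_mul, FreeGroup.lift_apply_of, gG_a, gG_b, gG_c]
    rw [mul_assoc, inv_mul_cancel]

theorem iso (k : ℕ) (hk : 3 ≤ k) :
    ∃ (φ₁ : PresentedGroup (relsW k) →* PresentedGroup (relsG k))
      (φ₂ : PresentedGroup (relsG k) →* PresentedGroup (relsW k)),
      φ₁ (PresentedGroup.of GenW.s) = PresentedGroup.of GenG.b ∧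
      φ₁ (PresentedGroup.of GenW.t) = PresentedGroup.of GenG.c ∧
      φ₂ (PresentedGroup.of GenG.a) =
        (PresentedGroup.of GenW.s * PresentedGroup.of GenW.t)⁻¹ ∧
      φ₂ (PresentedGroup.of GenG.b) = PresentedGroup.of GenW.s ∧
      φ₂ (PresentedGroup.of GenG.c) = PresentedGroup.of GenW.t ∧
      φ₂.comp φ₁ = MonoidHom.id (PresentedGroup (relsW k)) ∧
      φ₁.comp φ₂ = MonoidHom.id (PresentedGroup (relsG k)) := by
  refine ⟨PresentedGroup.toGroup (hf k), PresentedGroup.toGroup (hg k),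
    PresentedGroup.toGroup.of (hf k), PresentedGroup.toGroup.of (hf k),
    PresentedGroup.toGroup.of (hg k), PresentedGroup.toGroup.of (hg k),
    PresentedGroup.toGroup.of (hg k), ?_, ?_⟩
  · apply PresentedGroup.ext
    intro x
    cases x <;>
      simp [MonoidHom.comp_apply, PresentedGroup.toGroup.of]
  · apply PresentedGroup.ext
    intro x
    cases x <;>
      simp only [MonoidHom.comp_apply, MonoidHom.id_apply, PresentedGroup.toGroup.of,
        gG_a, gG_b, gG_c, _root_.map_mul, _root_.map_inv, fW_s, fW_t]
    rw [hGbc, inv_inv]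

end Stmt4
end

section
/- Let W = ⟨s, t, u | s² = t² = u² = 1, stust = ustus, tust = ustu⟩ (the group G₁₃). Then in W the element z = (stu)³ satisfies z = (tus)³ = (ust)³ and z is central. -/
namespace Stmt7

inductive Gen | s | t | u

open FreeGroup

/-- BMR presentation of G₁₃: ⟨s, t, u | s² = t² = u² = 1, stust = ustus, tust = ustu⟩. -/
def rels : Set (FreeGroup Gen) :=
  { of Gen.s ^ 2, of Gen.t ^ 2, of Gen.u ^ 2,
    of Gen.s * of Gen.t * of Gen.u * of Gen.s * of Gen.t *
      (of Gen.u * of Gen.s * of Gen.t * of Gen.u * of Gen.s)⁻¹,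
    of Gen.t * of Gen.u * of Gen.s * of Gen.t *
      (of Gen.u * of Gen.s * of Gen.t * of Gen.u)⁻¹ }

theorem G13_center :
    let s : PresentedGroup rels := PresentedGroup.of Gen.s
    let t : PresentedGroup rels := PresentedGroup.of Gen.t
    let u : PresentedGroup rels := PresentedGroup.of Gen.u
    let z := (s * t * u) ^ 3
    z = (t * u * s) ^ 3 ∧ z = (u * s * t) ^ 3 ∧
    z ∈ Subgroup.center (PresentedGroup rels) := by
  intro s t u z
  have hrel : ∀ r ∈ rels, PresentedGroup.mk rels r = 1 := fun r hr =>
    (QuotientGroup.eq_one_iff r).2 (Subgroup.subset_normalClosure hr)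
  have hs : s * s = 1 := by
    have := hrel _ (Set.mem_insert _ _)
    simp [pow_two] at this; exact this
  have ht : t * t = 1 := by
    have := hrel _ (Set.mem_insert_of_mem _ (Set.mem_insert _ _))
    simp [pow_two] at this; exact this
  have hu : u * u = 1 := by
    have := hrel _ (Set.mem_insert_of_mem _ (Set.mem_insert_of_mem _ (Set.mem_insert _ _)))
    simp [pow_two] at this; exact this
  have hR1 : s * (t * (u * (s * t))) = u * (s * (t * (u * s))) := by
    have := hrel _ (Set.mem_insert_of_mem _ (Set.mem_insert_of_mem _
      (Set.mem_insert_of_mem _ (Set.mem_insert _ _))))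
    rw [_root_.map_mul, _root_.map_inv, mul_inv_eq_one] at this
    simp [mul_assoc] at this; exact this
  have hR2 : t * (u * (s * t)) = u * (s * (t * u)) := by
    have := hrel _ (Set.mem_insert_of_mem _ (Set.mem_insert_of_mem _
      (Set.mem_insert_of_mem _ (Set.mem_insert_of_mem _ rfl))))
    rw [_root_.map_mul, _root_.map_inv, mul_inv_eq_one] at this
    simp [mul_assoc] at this; exact this
  have hs1 : ∀ x : PresentedGroup rels, s * (s * x) = x := fun x => by
    rw [← mul_assoc, hs, one_mul]
  have ht1 : ∀ x : PresentedGroup rels, t * (t * x) = x := fun x => by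
    rw [← mul_assoc, ht, one_mul]
  have hu1 : ∀ x : PresentedGroup rels, u * (u * x) = x := fun x => by
    rw [← mul_assoc, hu, one_mul]
  have hA : ∀ x : PresentedGroup rels,
      s * (t * (u * (s * (t * x)))) = u * (s * (t * (u * (s * x)))) := fun x => by
    simpa [mul_assoc] using congrArg (· * x) hR1
  have hmid : (s * t * u) ^ 3 = u * (s * (t * (u * (s * (t * (u * (s * t))))))) := by
    calc (s * t * u) ^ 3 = s * (t * (u * (s * (t * (u * (s * (t * u))))))) := by
          simp [pow_succ, mul_assoc]
      _ = s * (t * (u * (s * (t * (t * (u * (s * t))))))) := by rw [← hR2]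
      _ = u * (s * (t * (u * (s * (t * (u * (s * t))))))) := hA (t * (u * (s * t)))
  have h2 : (s * t * u) ^ 3 = (u * s * t) ^ 3 := by
    rw [hmid]; simp [pow_succ, mul_assoc]
  have hB : ∀ x : PresentedGroup rels,
      t * (u * (s * (t * x))) = u * (s * (t * (u * x))) := fun x => by
    simpa [mul_assoc] using congrArg (· * x) hR2
  have h1 : (s * t * u) ^ 3 = (t * u * s) ^ 3 := by
    calc (s * t * u) ^ 3 = u * (s * (t * (u * (s * (t * (u * (s * t))))))) := hmid
      _ = t * (u * (s * (t * (s * (t * (u * (s * t))))))) := (hB (s * (t * (u * (s * t))))).symm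
      _ = t * (u * (s * (t * (u * (s * (t * (u * s))))))) := by rw [hR1]
      _ = (t * u * s) ^ 3 := by simp [pow_succ, mul_assoc]
  have cs : s * (s * t * u) ^ 3 = (t * u * s) ^ 3 * s := by
    simp [pow_succ, mul_assoc, hs1, hs]
  have ct : t * (t * u * s) ^ 3 = (u * s * t) ^ 3 * t := by
    simp [pow_succ, mul_assoc, ht1, ht]
  have cu : u * (u * s * t) ^ 3 = (s * t * u) ^ 3 * u := by
    simp [pow_succ, mul_assoc, hu1, hu]
  refine ⟨h1, h2, Subgroup.mem_center_iff.2 fun g => ?_⟩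
  have key : ∀ x : Gen, (PresentedGroup.of x : PresentedGroup rels) * z = z * PresentedGroup.of x := by
    intro x
    cases x
    · show s * z = z * s
      show s * (s * t * u) ^ 3 = (s * t * u) ^ 3 * s
      rw [cs, ← h1]
    · show t * z = z * t
      show t * (s * t * u) ^ 3 = (s * t * u) ^ 3 * t
      rw [h1, ct, ← h2, h1]
    · show u * z = z * u
      show u * (s * t * u) ^ 3 = (s * t * u) ^ 3 * u
      rw [h2, cu, h2]
  obtain ⟨x, rfl⟩ := PresentedGroup.mk_surjective rels g
  refine FreeGroup.induction_on x ?_ ?_ ?_ ?_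
  · simp
  · exact key
  · intro y hy
    rw [_root_.map_inv]
    exact (Commute.inv_left hy : _)
  · intro a b ha hb
    rw [_root_.map_mul]
    exact (Commute.mul_left ha hb : _)

end Stmt7
end

section
/- Let W = ⟨s, t, u | s² = t² = u³ = 1, ustut = stutu, tus = stu⟩ (the group G₁₅). Then the element z = stutu satisfies z = ustut = tustu = tutus = utust and z is central in W. -/
namespace Stmt8

inductive Gen | s | t | u

open FreeGroup

/-- BMR presentation of G₁₅: ⟨s, t, u | s² = t² = u³ = 1, ustut = stutu, tus = stu⟩. -/
def rels : Set (FreeGroup Gen) :=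
  { of Gen.s ^ 2, of Gen.t ^ 2, of Gen.u ^ 3,
    of Gen.u * of Gen.s * of Gen.t * of Gen.u * of Gen.t *
      (of Gen.s * of Gen.t * of Gen.u * of Gen.t * of Gen.u)⁻¹,
    of Gen.t * of Gen.u * of Gen.s * (of Gen.s * of Gen.t * of Gen.u)⁻¹ }

lemma rel_one {r : FreeGroup Gen} (hr : r ∈ rels) :
    PresentedGroup.mk rels r = 1 :=
  (QuotientGroup.eq_one_iff r).mpr (Subgroup.subset_normalClosure hr)

theorem G15_center :
    let s : PresentedGroup rels := PresentedGroup.of Gen.s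
    let t : PresentedGroup rels := PresentedGroup.of Gen.t
    let u : PresentedGroup rels := PresentedGroup.of Gen.u
    let z := s * t * u * t * u
    z = u * s * t * u * t ∧ z = t * u * s * t * u ∧
    z = t * u * t * u * s ∧ z = u * t * u * s * t ∧
    z ∈ Subgroup.center (PresentedGroup rels) := by
  intro s t u z
  have hs : s * s = 1 := by
    have := rel_one (show of Gen.s ^ 2 ∈ rels by simp [rels])
    simp [pow_two, PresentedGroup.of] at this; exact this
  have ht : t * t = 1 := by
    have := rel_one (show of Gen.t ^ 2 ∈ rels by simp [rels])
    simp [pow_two, PresentedGroup.of] at this; exact this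
  have h1 : u * s * t * u * t = s * t * u * t * u := by
    have h := rel_one (show of Gen.u * of Gen.s * of Gen.t * of Gen.u * of Gen.t *
        (of Gen.s * of Gen.t * of Gen.u * of Gen.t * of Gen.u)⁻¹ ∈ rels by simp [rels])
    simp only [_root_.map_mul, _root_.map_inv, mul_inv_eq_one] at h
    exact h
  have h2 : t * u * s = s * t * u := by
    have h := rel_one (show of Gen.t * of Gen.u * of Gen.s *
        (of Gen.s * of Gen.t * of Gen.u)⁻¹ ∈ rels by simp [rels])
    simp only [_root_.map_mul, _root_.map_inv, mul_inv_eq_one] at h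
    exact h
  have e1 : z = u * s * t * u * t := h1.symm
  have e2 : z = t * u * s * t * u := by
    show s * t * u * t * u = _
    rw [show t * u * s * t * u = (t * u * s) * t * u by group, h2]
  have e3 : z = t * u * t * u * s := by
    rw [e2, show t * u * s * t * u = t * u * (s * t * u) by group, ← h2]; group
  have e4 : z = u * t * u * s * t := by
    rw [e1, show u * s * t * u * t = u * (s * t * u) * t by group, ← h2]; group
  refine ⟨e1, e2, e3, e4, ?_⟩
  have hzs : z * s = s * z := by
    conv_lhs => rw [e3]
    show t * u * t * u * s * s = s * (s * t * u * t * u)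
    rw [show t*u*t*u*s*s = t*u*t*u*(s*s) by group, hs,
        show s*(s*t*u*t*u) = (s*s)*(t*u*t*u) by group, hs]
    group
  have hzt : z * t = t * z := by
    conv_lhs => rw [e1]
    conv_rhs => rw [e2]
    rw [show u*s*t*u*t*t = u*s*t*u*(t*t) by group, ht,
        show t*(t*u*s*t*u) = (t*t)*(u*s*t*u) by group, ht]
    group
  have hzu : z * u = u * z := by
    conv_lhs => rw [e1]
    show u * s * t * u * t * u = u * (s * t * u * t * u)
    group
  have key : ∀ g : PresentedGroup rels, g * z = z * g := by
    intro g
    have hg : g ∈ Subgroup.closure (Set.range (PresentedGroup.of : Gen → PresentedGroup rels)) := by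
      rw [PresentedGroup.closure_range_of]; trivial
    refine Subgroup.closure_induction (fun x hx => ?_) (by simp) ?_ ?_ hg
    · obtain ⟨a, rfl⟩ := hx
      cases a
      · exact hzs.symm
      · exact hzt.symm
      · exact hzu.symm
    · intro a b _ _ ha hb
      rw [mul_assoc, hb, ← mul_assoc, ha, mul_assoc]
    · intro a _ ha
      calc a⁻¹ * z = a⁻¹ * z * a * a⁻¹ := by group
      _ = a⁻¹ * (a * z) * a⁻¹ := by rw [mul_assoc a⁻¹ z a, ← ha]
      _ = z * a⁻¹ := by group
  exact Subgroup.mem_center_iff.mpr key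
end Stmt8
end

section
/- Let G be the group presented by ⟨a, b, c | a² central, b³ = 1, a⁴ = c⁻⁵, abc = 1⟩ and W = ⟨s, t | s³ = t³ = 1, ststs = tstst⟩. Then s ↦ b, t ↦ (ac)⁻¹ extends to a group isomorphism W → G with inverse a ↦ (ststs)⁻¹, b ↦ s, c ↦ tsts. -/
namespace Stmt9

inductive GenW | s | t
inductive GenG | a | b | c

open FreeGroup

/-- BMR presentation of G₂₀: ⟨s, t | s³ = t³ = 1, ststs = tstst⟩. -/
def relsW : Set (FreeGroup GenW) :=
  { of GenW.s ^ 3, of GenW.t ^ 3,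
    of GenW.s * of GenW.t * of GenW.s * of GenW.t * of GenW.s *
      (of GenW.t * of GenW.s * of GenW.t * of GenW.s * of GenW.t)⁻¹ }

/-- ER presentation: ⟨a, b, c | a² central, b³ = 1, a⁴ = c⁻⁵, abc = 1⟩. -/
def relsG : Set (FreeGroup GenG) :=
  { of GenG.a ^ 2 * of GenG.b * (of GenG.a ^ 2)⁻¹ * (of GenG.b)⁻¹,
    of GenG.a ^ 2 * of GenG.c * (of GenG.a ^ 2)⁻¹ * (of GenG.c)⁻¹,
    of GenG.b ^ 3,
    of GenG.a ^ 4 * of GenG.c ^ 5,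
    of GenG.a * of GenG.b * of GenG.c }

abbrev W := PresentedGroup relsW
abbrev G := PresentedGroup relsG


section Gside
variable {H : Type*} [Group H]

lemma hcinv (a c : H) (hc5 : a^4*c^5 = 1) : c⁻¹^5 = a^4 := by
  have h : c^5 = (a^4)⁻¹ := eq_inv_of_mul_eq_one_right hc5
  rw [inv_pow, h, inv_inv]

lemma e_swap (a c : H) (hA : a^2*c = c*a^2) (n : ℕ) :
    c⁻¹^n * (a^2)⁻¹ = (a^2)⁻¹ * c⁻¹^n :=
  (((show Commute (a^2) c from hA).inv_left.inv_right).pow_right n).symm.eq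

lemma Gside_L (a b c : H) (hA : a^2*c = c*a^2) (hb : b = a⁻¹*c⁻¹) (hc5 : a^4*c^5 = 1) :
    b * (a*c)⁻¹ * b * (a*c)⁻¹ * b = a⁻¹ := by
  rw [hb]
  calc (a⁻¹*c⁻¹) * (a*c)⁻¹ * (a⁻¹*c⁻¹) * (a*c)⁻¹ * (a⁻¹*c⁻¹)
      = a⁻¹ * (c⁻¹^2 * (a^2)⁻¹) * c⁻¹^2 * (a^2)⁻¹ * c⁻¹ := by group
    _ = a⁻¹ * ((a^2)⁻¹ * c⁻¹^2) * c⁻¹^2 * (a^2)⁻¹ * c⁻¹ := by rw [e_swap a c hA]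
    _ = a⁻¹ * (a^2)⁻¹ * (c⁻¹^4 * (a^2)⁻¹) * c⁻¹ := by group
    _ = a⁻¹ * (a^2)⁻¹ * ((a^2)⁻¹ * c⁻¹^4) * c⁻¹ := by rw [e_swap a c hA]
    _ = a⁻¹ * (a^4)⁻¹ * c⁻¹^5 := by group
    _ = a⁻¹ * (a^4)⁻¹ * a^4 := by rw [hcinv a c hc5]
    _ = a⁻¹ := by group

lemma Gside_R (a b c : H) (hA : a^2*c = c*a^2) (hb : b = a⁻¹*c⁻¹) (hc5 : a^4*c^5 = 1) :
    (a*c)⁻¹ * b * (a*c)⁻¹ * b * (a*c)⁻¹ = a⁻¹ := by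
  rw [hb]
  calc (a*c)⁻¹ * (a⁻¹*c⁻¹) * (a*c)⁻¹ * (a⁻¹*c⁻¹) * (a*c)⁻¹
      = (c⁻¹^1 * (a^2)⁻¹) * c⁻¹^2 * (a^2)⁻¹ * c⁻¹^2 * a⁻¹ := by group
    _ = ((a^2)⁻¹ * c⁻¹^1) * c⁻¹^2 * (a^2)⁻¹ * c⁻¹^2 * a⁻¹ := by rw [e_swap a c hA]
    _ = (a^2)⁻¹ * (c⁻¹^3 * (a^2)⁻¹) * c⁻¹^2 * a⁻¹ := by group
    _ = (a^2)⁻¹ * ((a^2)⁻¹ * c⁻¹^3) * c⁻¹^2 * a⁻¹ := by rw [e_swap a c hA]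
    _ = (a^4)⁻¹ * c⁻¹^5 * a⁻¹ := by group
    _ = (a^4)⁻¹ * a^4 * a⁻¹ := by rw [hcinv a c hc5]
    _ = a⁻¹ := by group

lemma Gside_c (a b c : H) (hA : a^2*c = c*a^2) (hb : b = a⁻¹*c⁻¹) (hc5 : a^4*c^5 = 1) :
    (a*c)⁻¹ * b * (a*c)⁻¹ * b = c := by
  rw [hb]
  calc (a*c)⁻¹ * (a⁻¹*c⁻¹) * (a*c)⁻¹ * (a⁻¹*c⁻¹)
      = (c⁻¹^1 * (a^2)⁻¹) * c⁻¹^2 * (a^2)⁻¹ * c⁻¹ := by group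
    _ = ((a^2)⁻¹ * c⁻¹^1) * c⁻¹^2 * (a^2)⁻¹ * c⁻¹ := by rw [e_swap a c hA]
    _ = (a^2)⁻¹ * (c⁻¹^3 * (a^2)⁻¹) * c⁻¹ := by group
    _ = (a^2)⁻¹ * ((a^2)⁻¹ * c⁻¹^3) * c⁻¹ := by rw [e_swap a c hA]
    _ = (a^4)⁻¹ * c⁻¹^5 * c := by group
    _ = (a^4)⁻¹ * a^4 * c := by rw [hcinv a c hc5]
    _ = c := by group

lemma Gside_t3 (a b c : H) (hb : b = a⁻¹*c⁻¹) (hb3 : b^3 = 1) : ((a*c)⁻¹)^3 = 1 := by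
  calc ((a*c)⁻¹)^3 = a * ((a⁻¹*c⁻¹) * (a⁻¹*c⁻¹) * (a⁻¹*c⁻¹)) * a⁻¹ := by
        rw [pow_succ, pow_succ, pow_one]; group
    _ = a * (b*b*b) * a⁻¹ := by rw [← hb]
    _ = a * b^3 * a⁻¹ := by rw [pow_succ, pow_succ, pow_one]
    _ = 1 := by rw [hb3]; group

end Gside


section Wside
variable {H : Type*} [Group H]

lemma Whz (S T : H) (hbr : S*T*S*T*S = T*S*T*S*T) : (T*S)^5 = (S*T)^5 := by
  calc (T*S)^5 = (T*S*T*S*T)*(S*T*S*T*S) := by simp [pow_succ, mul_assoc]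
    _ = (T*S*T*S*T)*(T*S*T*S*T) := by rw [hbr]
    _ = (S*T*S*T*S)*(T*S*T*S*T) := by nth_rewrite 1 [← hbr]; rfl
    _ = (S*T)^5 := by simp [pow_succ, mul_assoc]

lemma Whw2 (S T : H) (hbr : S*T*S*T*S = T*S*T*S*T) : (S*T*S*T*S)^2 = (S*T)^5 := by
  calc (S*T*S*T*S)^2 = (S*T*S*T*S)*(S*T*S*T*S) := pow_two _
    _ = (S*T*S*T*S)*(T*S*T*S*T) := by nth_rewrite 2 [hbr]; rfl
    _ = (S*T)^5 := by simp [pow_succ, mul_assoc]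

lemma WzcS (S T : H) (hbr : S*T*S*T*S = T*S*T*S*T) : Commute ((S*T)^5) S := by
  have : S * (S*T)^5 = (S*T)^5 * S := by
    calc S * (S*T)^5 = S * (T*S)^5 := by rw [Whz S T hbr]
      _ = (S*T)^5 * S := by simp [pow_succ, mul_assoc]
  exact (this : Commute S ((S*T)^5)).symm

lemma WzcT (S T : H) (hbr : S*T*S*T*S = T*S*T*S*T) : Commute ((S*T)^5) T := by
  have : T * (S*T)^5 = (S*T)^5 * T := by
    calc T * (S*T)^5 = (T*S)^5 * T := by simp [pow_succ, mul_assoc]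
      _ = (S*T)^5 * T := by rw [Whz S T hbr]
  exact (this : Commute T ((S*T)^5)).symm

lemma WcommS (S T : H) (hbr : S*T*S*T*S = T*S*T*S*T) :
    ((S*T*S*T*S)⁻¹)^2 * S = S * ((S*T*S*T*S)⁻¹)^2 := by
  have h : Commute ((S*T*S*T*S)^2) S := by rw [Whw2 S T hbr]; exact WzcS S T hbr
  have h2 : Commute (((S*T*S*T*S)⁻¹)^2) S := by rw [inv_pow]; exact h.inv_left
  exact h2.eq

lemma Wcommx (S T : H) (hbr : S*T*S*T*S = T*S*T*S*T) :
    ((S*T*S*T*S)⁻¹)^2 * (T*S*T*S) = (T*S*T*S) * ((S*T*S*T*S)⁻¹)^2 := by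
  have cS := WzcS S T hbr
  have cT := WzcT S T hbr
  have h : Commute ((S*T*S*T*S)^2) (T*S*T*S) := by
    rw [Whw2 S T hbr]; exact ((cT.mul_right cS).mul_right cT).mul_right cS
  have h2 : Commute (((S*T*S*T*S)⁻¹)^2) (T*S*T*S) := by rw [inv_pow]; exact h.inv_left
  exact h2.eq

lemma Wkey5 (S T : H) (hbr : S*T*S*T*S = T*S*T*S*T) :
    (T*S*T*S)^5 = (S*T*S*T*S)^4 := by
  calc (T*S*T*S)^5 = ((T*S)^5)^2 := by simp [pow_succ, mul_assoc]
    _ = ((S*T)^5)^2 := by rw [Whz S T hbr]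
    _ = ((S*T*S*T*S)^2)^2 := by rw [Whw2 S T hbr]
    _ = (S*T*S*T*S)^4 := by group

lemma Wcompt (S T : H) (hbr : S*T*S*T*S = T*S*T*S*T) :
    ((S*T*S*T*S)⁻¹ * (T*S*T*S))⁻¹ = T := by
  rw [hbr]; group

end Wside


lemma mk_rel_one {α : Type*} (rels : Set (FreeGroup α)) {r : FreeGroup α} (h : r ∈ rels) :
    PresentedGroup.mk rels r = 1 :=
  (QuotientGroup.eq_one_iff r).mpr (Subgroup.subset_normalClosure h)

def fW : GenW → G
  | .s => PresentedGroup.of GenG.b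
  | .t => (PresentedGroup.of GenG.a * PresentedGroup.of GenG.c)⁻¹

def fG : GenG → W
  | .a => (PresentedGroup.of GenW.s * PresentedGroup.of GenW.t * PresentedGroup.of GenW.s *
      PresentedGroup.of GenW.t * PresentedGroup.of GenW.s)⁻¹
  | .b => PresentedGroup.of GenW.s
  | .c => PresentedGroup.of GenW.t * PresentedGroup.of GenW.s *
      PresentedGroup.of GenW.t * PresentedGroup.of GenW.s

-- relations in G
lemma hG1 : (PresentedGroup.of GenG.a : G)^2 * (PresentedGroup.of GenG.b : G) * ((PresentedGroup.of GenG.a : G)^2)⁻¹ * ((PresentedGroup.of GenG.b : G))⁻¹ = 1 := by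
  have h := mk_rel_one relsG (Set.mem_insert _ _)
  simp only [_root_.map_mul, _root_.map_pow, _root_.map_inv] at h
  exact h

lemma hG2 : (PresentedGroup.of GenG.a : G)^2 * (PresentedGroup.of GenG.c : G) * ((PresentedGroup.of GenG.a : G)^2)⁻¹ * ((PresentedGroup.of GenG.c : G))⁻¹ = 1 := by
  have h := mk_rel_one relsG (Set.mem_insert_of_mem _ (Set.mem_insert _ _))
  simp only [_root_.map_mul, _root_.map_pow, _root_.map_inv] at h
  exact h

lemma hG3 : (PresentedGroup.of GenG.b : G)^3 = 1 := by
  have h := mk_rel_one relsG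
    (Set.mem_insert_of_mem _ (Set.mem_insert_of_mem _ (Set.mem_insert _ _)))
  simp only [_root_.map_mul, _root_.map_pow, _root_.map_inv] at h
  exact h

lemma hG4 : (PresentedGroup.of GenG.a : G)^4 * (PresentedGroup.of GenG.c : G)^5 = 1 := by
  have h := mk_rel_one relsG
    (Set.mem_insert_of_mem _ (Set.mem_insert_of_mem _ (Set.mem_insert_of_mem _
      (Set.mem_insert _ _))))
  simp only [_root_.map_mul, _root_.map_pow, _root_.map_inv] at h
  exact h

lemma hG5 : (PresentedGroup.of GenG.a : G) * (PresentedGroup.of GenG.b : G) * (PresentedGroup.of GenG.c : G) = 1 := by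
  have h := mk_rel_one relsG
    (Set.mem_insert_of_mem _ (Set.mem_insert_of_mem _ (Set.mem_insert_of_mem _
      (Set.mem_insert_of_mem _ rfl))))
  simp only [_root_.map_mul, _root_.map_pow, _root_.map_inv] at h
  exact h

lemma hGA : (PresentedGroup.of GenG.a : G)^2 * (PresentedGroup.of GenG.c : G) = (PresentedGroup.of GenG.c : G) * (PresentedGroup.of GenG.a : G)^2 :=
  mul_inv_eq_iff_eq_mul.mp (mul_inv_eq_one.mp hG2)

lemma hGb : (PresentedGroup.of GenG.b : G) = (PresentedGroup.of GenG.a : G)⁻¹ * (PresentedGroup.of GenG.c : G)⁻¹ :=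
  eq_inv_mul_iff_mul_eq.mpr (mul_eq_one_iff_eq_inv.mp hG5)

-- relations in W
lemma hW1 : (PresentedGroup.of GenW.s : W)^3 = 1 := by
  have h := mk_rel_one relsW (Set.mem_insert _ _)
  simp only [_root_.map_mul, _root_.map_pow, _root_.map_inv] at h
  exact h

lemma hW2 : (PresentedGroup.of GenW.t : W)^3 = 1 := by
  have h := mk_rel_one relsW (Set.mem_insert_of_mem _ (Set.mem_insert _ _))
  simp only [_root_.map_mul, _root_.map_pow, _root_.map_inv] at h
  exact h

lemma hWbr : (PresentedGroup.of GenW.s : W)*(PresentedGroup.of GenW.t : W)*(PresentedGroup.of GenW.s : W)*(PresentedGroup.of GenW.t : W)*(PresentedGroup.of GenW.s : W) = (PresentedGroup.of GenW.t : W)*(PresentedGroup.of GenW.s : W)*(PresentedGroup.of GenW.t : W)*(PresentedGroup.of GenW.s : W)*(PresentedGroup.of GenW.t : W) := by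
  have h := mk_rel_one relsW (Set.mem_insert_of_mem _ (Set.mem_insert_of_mem _ rfl))
  simp only [_root_.map_mul, _root_.map_pow, _root_.map_inv] at h
  exact mul_inv_eq_one.mp h

lemma hliftW : ∀ r ∈ relsW, FreeGroup.lift fW r = 1 := by
  intro r hr
  simp only [relsW, Set.mem_insert_iff, Set.mem_singleton_iff] at hr
  rcases hr with rfl | rfl | rfl <;>
    simp only [_root_.map_mul, _root_.map_pow, _root_.map_inv, FreeGroup.lift_apply_of, fW]
  · exact hG3
  · exact Gside_t3 (PresentedGroup.of GenG.a : G) (PresentedGroup.of GenG.b : G) (PresentedGroup.of GenG.c : G) hGb hG3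
  · rw [Gside_L (PresentedGroup.of GenG.a : G) (PresentedGroup.of GenG.b : G) (PresentedGroup.of GenG.c : G) hGA hGb hG4, Gside_R (PresentedGroup.of GenG.a : G) (PresentedGroup.of GenG.b : G) (PresentedGroup.of GenG.c : G) hGA hGb hG4]
    group

lemma hliftG : ∀ r ∈ relsG, FreeGroup.lift fG r = 1 := by
  intro r hr
  simp only [relsG, Set.mem_insert_iff, Set.mem_singleton_iff] at hr
  rcases hr with rfl | rfl | rfl | rfl | rfl <;>
    simp only [_root_.map_mul, _root_.map_pow, _root_.map_inv, FreeGroup.lift_apply_of, fG]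
  · rw [WcommS (PresentedGroup.of GenW.s : W) (PresentedGroup.of GenW.t : W) hWbr]; group
  · rw [Wcommx (PresentedGroup.of GenW.s : W) (PresentedGroup.of GenW.t : W) hWbr]; group
  · exact hW1
  · rw [Wkey5 (PresentedGroup.of GenW.s : W) (PresentedGroup.of GenW.t : W) hWbr,
      inv_pow, inv_mul_cancel]
  · group

theorem G20_iso :
    ∃ (φ₁ : W →* G) (φ₂ : G →* W),
      φ₁ (PresentedGroup.of GenW.s) = PresentedGroup.of GenG.b ∧
      φ₁ (PresentedGroup.of GenW.t) =
        (PresentedGroup.of GenG.a * PresentedGroup.of GenG.c)⁻¹ ∧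
      φ₂ (PresentedGroup.of GenG.a) =
        (PresentedGroup.of GenW.s * PresentedGroup.of GenW.t * PresentedGroup.of GenW.s *
          PresentedGroup.of GenW.t * PresentedGroup.of GenW.s)⁻¹ ∧
      φ₂ (PresentedGroup.of GenG.b) = PresentedGroup.of GenW.s ∧
      φ₂ (PresentedGroup.of GenG.c) =
        PresentedGroup.of GenW.t * PresentedGroup.of GenW.s *
          PresentedGroup.of GenW.t * PresentedGroup.of GenW.s ∧
      φ₂.comp φ₁ = MonoidHom.id W ∧
      φ₁.comp φ₂ = MonoidHom.id G := by
  refine ⟨PresentedGroup.toGroup hliftW, PresentedGroup.toGroup hliftG,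
    PresentedGroup.toGroup.of hliftW, PresentedGroup.toGroup.of hliftW,
    PresentedGroup.toGroup.of hliftG, PresentedGroup.toGroup.of hliftG,
    PresentedGroup.toGroup.of hliftG, ?_, ?_⟩
  · refine PresentedGroup.ext fun x => ?_
    cases x
    · show PresentedGroup.toGroup hliftG (PresentedGroup.toGroup hliftW
        (PresentedGroup.of GenW.s)) = PresentedGroup.of GenW.s
      rw [PresentedGroup.toGroup.of]
      exact PresentedGroup.toGroup.of hliftG
    · show PresentedGroup.toGroup hliftG (PresentedGroup.toGroup hliftW
        (PresentedGroup.of GenW.t)) = PresentedGroup.of GenW.t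
      rw [PresentedGroup.toGroup.of]
      show PresentedGroup.toGroup hliftG
        ((PresentedGroup.of GenG.a * PresentedGroup.of GenG.c)⁻¹) = PresentedGroup.of GenW.t
      rw [_root_.map_inv, _root_.map_mul, PresentedGroup.toGroup.of, PresentedGroup.toGroup.of]
      exact Wcompt (PresentedGroup.of GenW.s : W) (PresentedGroup.of GenW.t : W) hWbr
  · refine PresentedGroup.ext fun x => ?_
    cases x
    · show PresentedGroup.toGroup hliftW (PresentedGroup.toGroup hliftG
        (PresentedGroup.of GenG.a)) = PresentedGroup.of GenG.a
      rw [PresentedGroup.toGroup.of]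
      show PresentedGroup.toGroup hliftW
        (((PresentedGroup.of GenW.s : W) * (PresentedGroup.of GenW.t : W) * (PresentedGroup.of GenW.s : W) * (PresentedGroup.of GenW.t : W) * (PresentedGroup.of GenW.s : W))⁻¹) = PresentedGroup.of GenG.a
      rw [_root_.map_inv, _root_.map_mul, _root_.map_mul, _root_.map_mul, _root_.map_mul,
        PresentedGroup.toGroup.of, PresentedGroup.toGroup.of]
      show ((PresentedGroup.of GenG.b : G) * ((PresentedGroup.of GenG.a : G) * (PresentedGroup.of GenG.c : G))⁻¹ * (PresentedGroup.of GenG.b : G) * ((PresentedGroup.of GenG.a : G) * (PresentedGroup.of GenG.c : G))⁻¹ * (PresentedGroup.of GenG.b : G))⁻¹ = (PresentedGroup.of GenG.a : G)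
      rw [Gside_L (PresentedGroup.of GenG.a : G) (PresentedGroup.of GenG.b : G) (PresentedGroup.of GenG.c : G) hGA hGb hG4, inv_inv]
    · show PresentedGroup.toGroup hliftW (PresentedGroup.toGroup hliftG
        (PresentedGroup.of GenG.b)) = PresentedGroup.of GenG.b
      rw [PresentedGroup.toGroup.of]
      exact PresentedGroup.toGroup.of hliftW
    · show PresentedGroup.toGroup hliftW (PresentedGroup.toGroup hliftG
        (PresentedGroup.of GenG.c)) = PresentedGroup.of GenG.c
      rw [PresentedGroup.toGroup.of]
      show PresentedGroup.toGroup hliftW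
        ((PresentedGroup.of GenW.t : W) * (PresentedGroup.of GenW.s : W) * (PresentedGroup.of GenW.t : W) * (PresentedGroup.of GenW.s : W)) = PresentedGroup.of GenG.c
      rw [_root_.map_mul, _root_.map_mul, _root_.map_mul, PresentedGroup.toGroup.of, PresentedGroup.toGroup.of]
      show ((PresentedGroup.of GenG.a : G) * (PresentedGroup.of GenG.c : G))⁻¹ * (PresentedGroup.of GenG.b : G) * ((PresentedGroup.of GenG.a : G) * (PresentedGroup.of GenG.c : G))⁻¹ * (PresentedGroup.of GenG.b : G) = (PresentedGroup.of GenG.c : G)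
      exact Gside_c (PresentedGroup.of GenG.a : G) (PresentedGroup.of GenG.b : G) (PresentedGroup.of GenG.c : G) hGA hGb hG4

end Stmt9
end

section
/- Let G be the group presented by ⟨a, b, c | a² = 1, b³ central, c⁵ = b⁻⁶, abc = 1⟩ and W = ⟨s, t, u | s² = t² = u² = 1, stust = tustu = ustus⟩. Then the maps s ↦ a, t ↦ (b⁻¹cb²)⁻¹, u ↦ (cb)⁻¹ and a ↦ s, b ↦ tustu, c ↦ (stustu)⁻¹ extend to mutually inverse group isomorphisms between W and G. -/
namespace Stmt10

inductive GenW | s | t | u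
inductive GenG | a | b | c

open FreeGroup

/-- BMR presentation of G₂₂: ⟨s, t, u | s² = t² = u² = 1, stust = tustu = ustus⟩. -/
def relsW : Set (FreeGroup GenW) :=
  { of GenW.s ^ 2, of GenW.t ^ 2, of GenW.u ^ 2,
    of GenW.s * of GenW.t * of GenW.u * of GenW.s * of GenW.t *
      (of GenW.t * of GenW.u * of GenW.s * of GenW.t * of GenW.u)⁻¹,
    of GenW.t * of GenW.u * of GenW.s * of GenW.t * of GenW.u *
      (of GenW.u * of GenW.s * of GenW.t * of GenW.u * of GenW.s)⁻¹ }

/-- ER presentation: ⟨a, b, c | a² = 1, b³ central, c⁵ = b⁻⁶, abc = 1⟩. -/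
def relsG : Set (FreeGroup GenG) :=
  { of GenG.a ^ 2,
    of GenG.b ^ 3 * of GenG.a * (of GenG.b ^ 3)⁻¹ * (of GenG.a)⁻¹,
    of GenG.b ^ 3 * of GenG.c * (of GenG.b ^ 3)⁻¹ * (of GenG.c)⁻¹,
    of GenG.c ^ 5 * of GenG.b ^ 6,
    of GenG.a * of GenG.b * of GenG.c }

abbrev W := PresentedGroup relsW
abbrev G := PresentedGroup relsG

/-! ### Projections from the free groups and the defining relations -/

def piW : FreeGroup GenW →* W := QuotientGroup.mk' _
def piG : FreeGroup GenG →* G := QuotientGroup.mk' _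

lemma piW_of (x : GenW) : piW (FreeGroup.of x) = PresentedGroup.of x := rfl
lemma piG_of (x : GenG) : piG (FreeGroup.of x) = PresentedGroup.of x := rfl

lemma piW_rel {r : FreeGroup GenW} (h : r ∈ relsW) : piW r = 1 :=
  (QuotientGroup.eq_one_iff r).2 (Subgroup.subset_normalClosure h)

lemma piG_rel {r : FreeGroup GenG} (h : r ∈ relsG) : piG r = 1 :=
  (QuotientGroup.eq_one_iff r).2 (Subgroup.subset_normalClosure h)

/-! ### The two lifting maps -/

def fWG : GenW → G
  | GenW.s => PresentedGroup.of GenG.a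
  | GenW.t => ((PresentedGroup.of GenG.b)⁻¹ * PresentedGroup.of GenG.c *
      (PresentedGroup.of GenG.b) ^ 2)⁻¹
  | GenW.u => (PresentedGroup.of GenG.c * PresentedGroup.of GenG.b)⁻¹

def fGW : GenG → W
  | GenG.a => PresentedGroup.of GenW.s
  | GenG.b => PresentedGroup.of GenW.t * PresentedGroup.of GenW.u * PresentedGroup.of GenW.s *
      PresentedGroup.of GenW.t * PresentedGroup.of GenW.u
  | GenG.c => (PresentedGroup.of GenW.s * PresentedGroup.of GenW.t * PresentedGroup.of GenW.u *
      PresentedGroup.of GenW.s * PresentedGroup.of GenW.t * PresentedGroup.of GenW.u)⁻¹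

/-! ### Consequences of the relations in `W` -/

section Wside

local notation "S" => (PresentedGroup.of GenW.s : W)
local notation "T" => (PresentedGroup.of GenW.t : W)
local notation "U" => (PresentedGroup.of GenW.u : W)
local notation "Zw" => (T * U * S * T * U)

lemma wS : S * S = 1 := by
  have h := piW_rel (r := FreeGroup.of GenW.s ^ 2) (by simp [relsW])
  rw [_root_.map_pow, piW_of, pow_two] at h; exact h

lemma wT : T * T = 1 := by
  have h := piW_rel (r := FreeGroup.of GenW.t ^ 2) (by simp [relsW])
  rw [_root_.map_pow, piW_of, pow_two] at h; exact h

lemma wU : U * U = 1 := by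
  have h := piW_rel (r := FreeGroup.of GenW.u ^ 2) (by simp [relsW])
  rw [_root_.map_pow, piW_of, pow_two] at h; exact h

lemma q1 : S * T * U * S * T = Zw := by
  have h := piW_rel (r := of GenW.s * of GenW.t * of GenW.u * of GenW.s * of GenW.t *
      (of GenW.t * of GenW.u * of GenW.s * of GenW.t * of GenW.u)⁻¹) (by simp [relsW])
  simp only [_root_.map_mul, _root_.map_inv, piW_of] at h
  exact mul_inv_eq_one.mp h

lemma q2 : U * S * T * U * S = Zw := by
  have h := piW_rel (r := of GenW.t * of GenW.u * of GenW.s * of GenW.t * of GenW.u *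
      (of GenW.u * of GenW.s * of GenW.t * of GenW.u * of GenW.s)⁻¹) (by simp [relsW])
  simp only [_root_.map_mul, _root_.map_inv, piW_of] at h
  exact (mul_inv_eq_one.mp h).symm

lemma cu : S * Zw = Zw * U := by
  conv_rhs => rw [← q1]
  group

lemma cs : T * Zw = Zw * S := by
  conv_rhs => rw [← q2]
  calc T * Zw = (T*T)*(U*S*T*U) := by group
    _ = 1*(U*S*T*U) := by rw [wT]
    _ = (U*S*T*U)*1 := by group
    _ = (U*S*T*U)*(S*S) := by rw [wS]
    _ = U*S*T*U*S*S := by group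

lemma ct : U * Zw = Zw * T := by
  conv_lhs => rw [← q2]
  conv_rhs => rw [← q1]
  calc U*(U*S*T*U*S) = (U*U)*(S*T*U*S) := by group
    _ = 1*(S*T*U*S) := by rw [wU]
    _ = (S*T*U*S)*1 := by group
    _ = (S*T*U*S)*(T*T) := by rw [wT]
    _ = S*T*U*S*T*T := by group

lemma c3S : S * (Zw*Zw*Zw) = (Zw*Zw*Zw) * S := by
  calc S * (Zw*Zw*Zw) = (S*Zw)*(Zw*Zw) := by group
    _ = (Zw*U)*(Zw*Zw) := by rw [cu]
    _ = Zw*((U*Zw)*Zw) := by group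
    _ = Zw*((Zw*T)*Zw) := by rw [ct]
    _ = (Zw*Zw)*(T*Zw) := by group
    _ = (Zw*Zw)*(Zw*S) := by rw [cs]
    _ = (Zw*Zw*Zw)*S := by group

lemma cSZ : (S*T*U*S*T*U) * (Zw*Zw*Zw) = (Zw*Zw*Zw) * (S*T*U*S*T*U) := by
  calc (S*T*U*S*T*U)*(Zw*Zw*Zw) = (S*(Zw*Zw*Zw))*Zw := by group
    _ = ((Zw*Zw*Zw)*S)*Zw := by rw [c3S]
    _ = (Zw*Zw*Zw)*(S*Zw) := by group
    _ = (Zw*Zw*Zw)*(S*T*U*S*T*U) := by group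

lemma comZ3 : Commute ((Zw*Zw*Zw)) ((S*T*U*S*T*U)⁻¹) :=
  Commute.inv_right (cSZ.symm)

lemma L2 : (Zw*U)*(Zw*U) = (Zw*Zw)*(T*U) := by
  calc (Zw*U)*(Zw*U) = Zw*(U*Zw)*U := by group
    _ = Zw*(Zw*T)*U := by rw [ct]
    _ = (Zw*Zw)*(T*U) := by group

lemma L3 : (Zw*Zw)*(T*U)*(Zw*U) = (Zw*Zw*Zw)*(S*T*U) := by
  calc (Zw*Zw)*(T*U)*(Zw*U) = (Zw*Zw)*(T*(U*Zw))*U := by group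
    _ = (Zw*Zw)*(T*(Zw*T))*U := by rw [ct]
    _ = (Zw*Zw)*((T*Zw)*(T*U)) := by group
    _ = (Zw*Zw)*((Zw*S)*(T*U)) := by rw [cs]
    _ = (Zw*Zw*Zw)*(S*T*U) := by group

lemma L4 : (Zw*Zw*Zw)*(S*T*U)*(Zw*U) = (Zw*Zw*Zw*Zw)*(U*S*T*U) := by
  calc (Zw*Zw*Zw)*(S*T*U)*(Zw*U) = (Zw*Zw*Zw)*(S*(T*(U*Zw)))*U := by group
    _ = (Zw*Zw*Zw)*(S*(T*(Zw*T)))*U := by rw [ct]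
    _ = (Zw*Zw*Zw)*(S*((T*Zw)*(T*U))) := by group
    _ = (Zw*Zw*Zw)*(S*((Zw*S)*(T*U))) := by rw [cs]
    _ = (Zw*Zw*Zw)*((S*Zw)*(S*(T*U))) := by group
    _ = (Zw*Zw*Zw)*((Zw*U)*(S*(T*U))) := by rw [cu]
    _ = (Zw*Zw*Zw*Zw)*(U*S*T*U) := by group

lemma L5 : (Zw*Zw*Zw*Zw)*(U*S*T*U)*(Zw*U) = (Zw*Zw*Zw*Zw*Zw*Zw) := by
  calc (Zw*Zw*Zw*Zw)*(U*S*T*U)*(Zw*U)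
      = (Zw*Zw*Zw*Zw)*(U*(S*(T*(U*Zw))))*U := by group
    _ = (Zw*Zw*Zw*Zw)*(U*(S*(T*(Zw*T))))*U := by rw [ct]
    _ = (Zw*Zw*Zw*Zw)*(U*(S*((T*Zw)*(T*U)))) := by group
    _ = (Zw*Zw*Zw*Zw)*(U*(S*((Zw*S)*(T*U)))) := by rw [cs]
    _ = (Zw*Zw*Zw*Zw)*(U*((S*Zw)*(S*(T*U)))) := by group
    _ = (Zw*Zw*Zw*Zw)*(U*((Zw*U)*(S*(T*U)))) := by rw [cu]
    _ = (Zw*Zw*Zw*Zw)*((U*Zw)*(U*(S*(T*U)))) := by group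
    _ = (Zw*Zw*Zw*Zw)*((Zw*T)*(U*(S*(T*U)))) := by rw [ct]
    _ = (Zw*Zw*Zw*Zw*Zw*Zw) := by group

lemma h45 : (Zw*U)*(Zw*U)*(Zw*U)*(Zw*U)*(Zw*U) = (Zw*Zw*Zw*Zw*Zw*Zw) := by
  rw [L2, L3, L4, L5]

lemma hX : S*T*U*S*T*U = Zw*U := by
  rw [← cu]; group

lemma h1' : Zw⁻¹ * (S*Zw) = U := by rw [cu]; group
lemma h2' : Zw⁻¹ * (U*Zw) = T := by rw [ct]; group

lemma lemT : (Zw⁻¹ * (S*T*U*S*T*U)⁻¹ * (Zw*Zw))⁻¹ = T := by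
  calc (Zw⁻¹ * (S*T*U*S*T*U)⁻¹ * (Zw*Zw))⁻¹ = Zw⁻¹*((Zw⁻¹*(S*Zw))*Zw) := by group
    _ = Zw⁻¹*(U*Zw) := by rw [h1']
    _ = T := h2'

lemma lemU : ((S*T*U*S*T*U)⁻¹*Zw)⁻¹ = U := by
  calc ((S*T*U*S*T*U)⁻¹*Zw)⁻¹ = Zw⁻¹*(S*Zw) := by group
    _ = U := h1'

lemma hliftG : ∀ r ∈ relsG, FreeGroup.lift fGW r = 1 := by
  intro r hr
  simp only [relsG, Set.mem_insert_iff, Set.mem_singleton_iff] at hr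
  rcases hr with rfl | rfl | rfl | rfl | rfl <;>
    simp only [_root_.map_mul, _root_.map_inv, _root_.map_pow, FreeGroup.lift_apply_of, fGW]
  · rw [pow_two, wS]
  · simp only [pow_succ, pow_zero, one_mul]
    rw [← c3S]; group
  · simp only [pow_succ, pow_zero, one_mul]
    rw [(comZ3.eq : (Zw*Zw*Zw) * (S*T*U*S*T*U)⁻¹ = (S*T*U*S*T*U)⁻¹ * (Zw*Zw*Zw))]
    group
  · simp only [pow_succ, pow_zero, one_mul]
    rw [hX, ← h45]; group
  · group

end Wside

/-! ### Consequences of the relations in `G` -/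

section Gside

local notation "A" => (PresentedGroup.of GenG.a : G)
local notation "B" => (PresentedGroup.of GenG.b : G)
local notation "C" => (PresentedGroup.of GenG.c : G)

lemma rA : A * A = 1 := by
  have h := piG_rel (r := FreeGroup.of GenG.a ^ 2) (by simp [relsG])
  rw [_root_.map_pow, piG_of, pow_two] at h; exact h

lemma rBCcomm : B^3 * C = C * B^3 := by
  have h := piG_rel (r := of GenG.b ^ 3 * of GenG.c * (of GenG.b ^ 3)⁻¹ * (of GenG.c)⁻¹)
    (by simp [relsG])
  simp only [_root_.map_mul, _root_.map_inv, _root_.map_pow, piG_of] at h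
  calc B^3*C = (B^3*C*(B^3)⁻¹*C⁻¹)*(C*B^3) := by group
    _ = 1*(C*B^3) := by rw [h]
    _ = C*B^3 := one_mul _

lemma rCB : C^5 * B^6 = 1 := by
  have h := piG_rel (r := of GenG.c ^ 5 * of GenG.b ^ 6) (by simp [relsG])
  simpa only [_root_.map_mul, _root_.map_pow, piG_of] using h

lemma rABC : A * B * C = 1 := by
  have h := piG_rel (r := of GenG.a * of GenG.b * of GenG.c) (by simp [relsG])
  simpa only [_root_.map_mul, piG_of] using h

lemma hA : A = C⁻¹ * B⁻¹ := by
  calc A = (A*B*C)*(C⁻¹*B⁻¹) := by group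
    _ = 1*(C⁻¹*B⁻¹) := by rw [rABC]
    _ = C⁻¹*B⁻¹ := one_mul _

lemma hAA : C⁻¹*B⁻¹*(C⁻¹*B⁻¹) = 1 := by rw [← hA]; exact rA

lemma comBC : Commute (B^3) C := rBCcomm
lemma cBinv : Commute ((B^3)⁻¹) (C⁻¹) := (comBC.inv_left).inv_right
lemma hsw1 : (B^3)⁻¹ * C⁻¹ = C⁻¹ * (B^3)⁻¹ := cBinv.eq
lemma hsw2 : (B^3)⁻¹ * (C⁻¹*C⁻¹) = (C⁻¹*C⁻¹) * (B^3)⁻¹ := (cBinv.mul_right cBinv).eq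
lemma hsw3 : (B^3)⁻¹ * (C⁻¹*C⁻¹*C⁻¹) = (C⁻¹*C⁻¹*C⁻¹) * (B^3)⁻¹ :=
  ((cBinv.mul_right cBinv).mul_right cBinv).eq

lemma hC5 : C^5 = (B^6)⁻¹ := mul_eq_one_iff_eq_inv.mp rCB
lemma hC5inv : (C^5)⁻¹ = B^6 := by rw [hC5, inv_inv]

lemma E1 : A * (B⁻¹*C*B^2)⁻¹ * (C*B)⁻¹ * A * (B⁻¹*C*B^2)⁻¹ = B := by
  rw [hA]
  calc (C⁻¹*B⁻¹) * (B⁻¹*C*B^2)⁻¹ * (C*B)⁻¹ * (C⁻¹*B⁻¹) * (B⁻¹*C*B^2)⁻¹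
      = C⁻¹ * ((B^3)⁻¹ * (C⁻¹*C⁻¹*C⁻¹)) * ((B^3)⁻¹ * (C⁻¹ * B)) := by group
    _ = C⁻¹ * ((C⁻¹*C⁻¹*C⁻¹) * (B^3)⁻¹) * ((B^3)⁻¹ * (C⁻¹ * B)) := by rw [hsw3]
    _ = C⁻¹*(C⁻¹*C⁻¹*C⁻¹) * ((B^3)⁻¹ * ((B^3)⁻¹ * C⁻¹)) * B := by group
    _ = C⁻¹*(C⁻¹*C⁻¹*C⁻¹) * ((B^3)⁻¹ * (C⁻¹ * (B^3)⁻¹)) * B := by rw [hsw1]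
    _ = C⁻¹*(C⁻¹*C⁻¹*C⁻¹) * (((B^3)⁻¹ * C⁻¹) * (B^3)⁻¹) * B := by group
    _ = C⁻¹*(C⁻¹*C⁻¹*C⁻¹) * ((C⁻¹ * (B^3)⁻¹) * (B^3)⁻¹) * B := by rw [hsw1]
    _ = (C^5)⁻¹ * ((B^3)⁻¹*(B^3)⁻¹) * B := by group
    _ = B^6 * ((B^3)⁻¹*(B^3)⁻¹) * B := by rw [hC5inv]
    _ = B := by group

lemma E2 : (B⁻¹*C*B^2)⁻¹ * (C*B)⁻¹ * A * (B⁻¹*C*B^2)⁻¹ * (C*B)⁻¹ = B := by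
  rw [hA]
  calc (B⁻¹*C*B^2)⁻¹ * (C*B)⁻¹ * (C⁻¹*B⁻¹) * (B⁻¹*C*B^2)⁻¹ * (C*B)⁻¹
      = (B⁻¹*B⁻¹) * ((C⁻¹*C⁻¹*C⁻¹) * ((B^3)⁻¹ * (C⁻¹*C⁻¹))) := by group
    _ = (B⁻¹*B⁻¹) * ((C⁻¹*C⁻¹*C⁻¹) * ((C⁻¹*C⁻¹) * (B^3)⁻¹)) := by rw [hsw2]
    _ = (B⁻¹*B⁻¹) * ((C^5)⁻¹ * (B^3)⁻¹) := by group
    _ = (B⁻¹*B⁻¹) * (B^6 * (B^3)⁻¹) := by rw [hC5inv]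
    _ = B := by group

lemma E3 : (C*B)⁻¹ * A * (B⁻¹*C*B^2)⁻¹ * (C*B)⁻¹ * A = B := by
  rw [hA]
  calc (C*B)⁻¹ * (C⁻¹*B⁻¹) * (B⁻¹*C*B^2)⁻¹ * (C*B)⁻¹ * (C⁻¹*B⁻¹)
      = B⁻¹ * ((C⁻¹*C⁻¹) * ((B^3)⁻¹ * (C⁻¹*C⁻¹*C⁻¹))) * B⁻¹ := by group
    _ = B⁻¹ * ((C⁻¹*C⁻¹) * ((C⁻¹*C⁻¹*C⁻¹) * (B^3)⁻¹)) * B⁻¹ := by rw [hsw3]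
    _ = B⁻¹ * ((C^5)⁻¹ * (B^3)⁻¹) * B⁻¹ := by group
    _ = B⁻¹ * (B^6 * (B^3)⁻¹) * B⁻¹ := by rw [hC5inv]
    _ = B := by group

lemma R2' : (B⁻¹*C*B^2)⁻¹ * (B⁻¹*C*B^2)⁻¹ = 1 := by
  calc (B⁻¹*C*B^2)⁻¹ * (B⁻¹*C*B^2)⁻¹ = (B⁻¹*B⁻¹) * (C⁻¹*B⁻¹*(C⁻¹*B⁻¹)) * (B*B) := by group
    _ = (B⁻¹*B⁻¹) * 1 * (B*B) := by rw [hAA]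
    _ = 1 := by group

lemma R3' : (C*B)⁻¹ * (C*B)⁻¹ = 1 := by
  calc (C*B)⁻¹ * (C*B)⁻¹ = B⁻¹ * (C⁻¹*B⁻¹*(C⁻¹*B⁻¹)) * B := by group
    _ = B⁻¹ * 1 * B := by rw [hAA]
    _ = 1 := by group

lemma lemC : (A * (B⁻¹*C*B^2)⁻¹ * (C*B)⁻¹ * A * (B⁻¹*C*B^2)⁻¹ * (C*B)⁻¹)⁻¹ = C := by
  rw [E1]; group

lemma hliftW : ∀ r ∈ relsW, FreeGroup.lift fWG r = 1 := by
  intro r hr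
  simp only [relsW, Set.mem_insert_iff, Set.mem_singleton_iff] at hr
  rcases hr with rfl | rfl | rfl | rfl | rfl <;>
    simp only [_root_.map_mul, _root_.map_inv, _root_.map_pow, FreeGroup.lift_apply_of, fWG]
  · rw [pow_two, rA]
  · rw [pow_two, R2']
  · rw [pow_two, R3']
  · rw [E1, E2]; group
  · rw [E2, E3]; group

end Gside

/-! ### Main theorem -/

theorem G22_iso :
    ∃ (φ₁ : W →* G) (φ₂ : G →* W),
      φ₁ (PresentedGroup.of GenW.s) = PresentedGroup.of GenG.a ∧
      φ₁ (PresentedGroup.of GenW.t) =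
        ((PresentedGroup.of GenG.b)⁻¹ * PresentedGroup.of GenG.c *
          (PresentedGroup.of GenG.b) ^ 2)⁻¹ ∧
      φ₁ (PresentedGroup.of GenW.u) =
        (PresentedGroup.of GenG.c * PresentedGroup.of GenG.b)⁻¹ ∧
      φ₂ (PresentedGroup.of GenG.a) = PresentedGroup.of GenW.s ∧
      φ₂ (PresentedGroup.of GenG.b) =
        PresentedGroup.of GenW.t * PresentedGroup.of GenW.u * PresentedGroup.of GenW.s *
          PresentedGroup.of GenW.t * PresentedGroup.of GenW.u ∧
      φ₂ (PresentedGroup.of GenG.c) =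
        (PresentedGroup.of GenW.s * PresentedGroup.of GenW.t * PresentedGroup.of GenW.u *
          PresentedGroup.of GenW.s * PresentedGroup.of GenW.t * PresentedGroup.of GenW.u)⁻¹ ∧
      φ₂.comp φ₁ = MonoidHom.id W ∧
      φ₁.comp φ₂ = MonoidHom.id G := by
  refine ⟨PresentedGroup.toGroup hliftW, PresentedGroup.toGroup hliftG,
    PresentedGroup.toGroup.of hliftW, PresentedGroup.toGroup.of hliftW,
    PresentedGroup.toGroup.of hliftW, PresentedGroup.toGroup.of hliftG,
    PresentedGroup.toGroup.of hliftG, PresentedGroup.toGroup.of hliftG, ?_, ?_⟩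
  · refine PresentedGroup.ext fun x => ?_
    cases x
    · simp only [MonoidHom.comp_apply, MonoidHom.id_apply, PresentedGroup.toGroup.of, fWG, fGW]
    · simp only [MonoidHom.comp_apply, MonoidHom.id_apply, PresentedGroup.toGroup.of, fWG,
        _root_.map_mul, _root_.map_inv, _root_.map_pow, pow_two, fGW]
      exact lemT
    · simp only [MonoidHom.comp_apply, MonoidHom.id_apply, PresentedGroup.toGroup.of, fWG,
        _root_.map_mul, _root_.map_inv, _root_.map_pow, fGW]
      exact lemU
  · refine PresentedGroup.ext fun x => ?_
    cases x
    · simp only [MonoidHom.comp_apply, MonoidHom.id_apply, PresentedGroup.toGroup.of, fGW, fWG]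
    · simp only [MonoidHom.comp_apply, MonoidHom.id_apply, PresentedGroup.toGroup.of, fGW,
        _root_.map_mul, _root_.map_inv, fWG]
      exact E2
    · simp only [MonoidHom.comp_apply, MonoidHom.id_apply, PresentedGroup.toGroup.of, fGW,
        _root_.map_mul, _root_.map_inv, fWG]
      exact lemC

end Stmt10
end

section
/- Let B be the group ⟨s, t, u | stus = tust = ustu⟩ (the braid group of G₁₂). Then the element z = (stu)⁴ is central in B. -/
namespace Stmt13

inductive Gen | s | t | u

open FreeGroup

/-- Artin-like presentation of the braid group of G₁₂: ⟨s, t, u | stus = tust = ustu⟩. -/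
def rels : Set (FreeGroup Gen) :=
  { of Gen.s * of Gen.t * of Gen.u * of Gen.s *
      (of Gen.t * of Gen.u * of Gen.s * of Gen.t)⁻¹,
    of Gen.u * of Gen.s * of Gen.t * of Gen.u *
      (of Gen.t * of Gen.u * of Gen.s * of Gen.t)⁻¹ }

theorem stu4_central :
    let s : PresentedGroup rels := PresentedGroup.of Gen.s
    let t : PresentedGroup rels := PresentedGroup.of Gen.t
    let u : PresentedGroup rels := PresentedGroup.of Gen.u
    (s * t * u) ^ 4 ∈ Subgroup.center (PresentedGroup rels) := by
  intro s t u
  have key : ∀ r ∈ rels, PresentedGroup.mk rels r = 1 := fun r hr =>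
    (QuotientGroup.eq_one_iff r).mpr (Subgroup.subset_normalClosure hr)
  have h1 : s * t * u * s = t * u * s * t := by
    have := key _ (Set.mem_insert _ _)
    simp only [_root_.map_mul, _root_.map_inv] at this
    exact mul_inv_eq_one.mp this
  have h2 : u * s * t * u = t * u * s * t := by
    have := key _ (Set.mem_insert_of_mem _ rfl)
    simp only [_root_.map_mul, _root_.map_inv] at this
    exact mul_inv_eq_one.mp this
  -- conjugation by δ = stus cycles s → t → u → s
  have hsd : s * (s * t * u * s) = (s * t * u * s) * t := by
    nth_rewrite 1 [h1]; simp [mul_assoc]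
  have htd : t * (s * t * u * s) = (s * t * u * s) * u := by
    nth_rewrite 1 [h1.trans h2.symm]
    rw [show t * (u * s * t * u) = (t * u * s * t) * u by simp [mul_assoc], ← h1]
  have hud : u * (s * t * u * s) = (s * t * u * s) * s := by
    rw [show u * (s * t * u * s) = (u * s * t * u) * s by simp [mul_assoc], h2, ← h1]
  -- (stu)⁴ = (stus)(tust)(ustu) = δ³
  have hz : (s * t * u) ^ 4 = (s * t * u * s) * ((s * t * u * s) * (s * t * u * s)) := by
    rw [show (s * t * u) ^ 4 = (s * t * u * s) * ((t * u * s * t) * (u * s * t * u)) by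
      simp [pow_succ, mul_assoc], h2, ← h1]
  set δ : PresentedGroup rels := s * t * u * s with hδ
  have cube : ∀ a b c : PresentedGroup rels,
      a * δ = δ * b → b * δ = δ * c → c * δ = δ * a →
      a * (δ * (δ * δ)) = (δ * (δ * δ)) * a := by
    intro a b c hab hbc hca
    calc a * (δ * (δ * δ)) = (a * δ) * (δ * δ) := by simp [mul_assoc]
      _ = δ * ((b * δ) * δ) := by rw [hab]; simp [mul_assoc]
      _ = δ * (δ * (c * δ)) := by rw [hbc]; simp [mul_assoc]
      _ = (δ * (δ * δ)) * a := by rw [hca]; simp [mul_assoc]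
  refine Subgroup.mem_center_iff.mpr fun g => ?_
  have hg : g ∈ Subgroup.closure (Set.range (PresentedGroup.of : Gen → PresentedGroup rels)) := by
    rw [PresentedGroup.closure_range_of]; exact Subgroup.mem_top g
  rw [hz]
  induction hg using Subgroup.closure_induction with
  | mem x hx =>
    obtain ⟨a, rfl⟩ := hx
    cases a with
    | s => exact cube s t u hsd htd hud
    | t => exact cube t u s htd hud hsd
    | u => exact cube u s t hud hsd htd
  | one => rw [one_mul, mul_one]
  | mul a b _ _ ha hb =>
    calc a * b * (δ * (δ * δ)) = a * (b * (δ * (δ * δ))) := by simp [mul_assoc]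
      _ = a * (δ * (δ * δ)) * b := by rw [hb]; simp [mul_assoc]
      _ = δ * (δ * δ) * (a * b) := by rw [ha]; simp [mul_assoc]
  | inv a _ ha =>
    calc a⁻¹ * (δ * (δ * δ)) = a⁻¹ * (δ * (δ * δ) * a) * a⁻¹ := by simp [mul_assoc]
      _ = a⁻¹ * (a * (δ * (δ * δ))) * a⁻¹ := by rw [← ha]
      _ = δ * (δ * δ) * a⁻¹ := by simp [mul_assoc]

end Stmt13
end
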